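/- For t a parameter over Q with the curve nonsingular, the point (x,y) = (−4(t−1)(3t^2−3t+1)t^5, 4(t−1)(3t^2−3t+1)t^5(2t^2−2t+1)(2t−1)) has order exactly 12 on the elliptic curve y^2 = x(x^2 + Ax + B) with A = 24t^8 − 96t^7 + 216t^6 − 312t^5 + 288t^4 − 168t^3 + 60t^2 − 12t + 1 and B = 16(3t^2−3t+1)^2(t−1)^6 t^6. -/

import Mathlib

/-- The universal elliptic curve `F₁₂ᵗ : y² = x(x² + Ax + B)` over `X₁(12)`, with
`A = 24t⁸ − 96t⁷ + 216t⁶ − 312t⁵ + 288t⁴ − 168t³ + 60t² − 12t + 1` and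
`B = 16(3t² − 3t + 1)²(t−1)⁶t⁶`. -/
def F12 (t : ℚ) : WeierstrassCurve.Affine ℚ :=
  { a₁ := 0
    a₂ := 24*t^8 - 96*t^7 + 216*t^6 - 312*t^5 + 288*t^4 - 168*t^3 + 60*t^2 - 12*t + 1
    a₃ := 0
    a₄ := 16*(3*t^2 - 3*t + 1)^2*(t - 1)^6*t^6
    a₆ := 0 }

open WeierstrassCurve.Affine

lemma some_congr' {F : Type*} [Field F] {W : WeierstrassCurve.Affine F} {x y x' y' : F}
    (h : W.Nonsingular x y) (h' : W.Nonsingular x' y') (hx : x = x') (hy : y = y') :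
    Point.some _ _ h = Point.some _ _ h' := by subst hx; subst hy; rfl

theorem stmt15 (t : ℚ) (h0 : t ≠ 0) (h1 : t ≠ 1)
    (hΔ : (6*t^2 - 6*t + 1)*(2*t^2 - 2*t + 1)*(2*t - 1) ≠ 0) :
    ∃ h : (F12 t).Nonsingular (-4*(t-1)*(3*t^2-3*t+1)*t^5)
      (4*(t-1)*(3*t^2-3*t+1)*t^5*(2*t^2-2*t+1)*(2*t-1)),
      addOrderOf (WeierstrassCurve.Affine.Point.some _ _ h) = 12 := by
  have ht1 : t - 1 ≠ 0 := sub_ne_zero.mpr h1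
  have h2t1 : 2*t - 1 ≠ 0 := fun h => hΔ (by rw [h, mul_zero])
  have hq2 : 2*t^2 - 2*t + 1 ≠ 0 := by nlinarith [sq_nonneg (2*t - 1)]
  have hq3 : 3*t^2 - 3*t + 1 ≠ 0 := by nlinarith [sq_nonneg (2*t - 1)]
  have ht5 : t^5 ≠ 0 := pow_ne_zero _ h0
  have hy1 : (4*(t-1)*(3*t^2-3*t+1)*t^5*(2*t^2-2*t+1)*(2*t-1)) ≠ 0 := by
    exact mul_ne_zero (mul_ne_zero (mul_ne_zero (mul_ne_zero
      (mul_ne_zero (by norm_num) ht1) hq3) ht5) hq2) h2t1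
  have hy2 : (-4*t^2*(t-1)^2*(2*t-1)^2*(2*t^2-2*t+1)*(3*t^2-3*t+1)^2) ≠ 0 := by
    exact mul_ne_zero (mul_ne_zero (mul_ne_zero (mul_ne_zero (mul_ne_zero
      (by norm_num) (pow_ne_zero _ h0)) (pow_ne_zero _ ht1)) (pow_ne_zero _ h2t1)) hq2)
      (pow_ne_zero _ hq3)
  have hy4 : (-4*t^4*(t-1)^4*(2*t-1)^2*(2*t^2-2*t+1)) ≠ 0 := by
    exact mul_ne_zero (mul_ne_zero (mul_ne_zero (mul_ne_zero
      (by norm_num) (pow_ne_zero _ h0)) (pow_ne_zero _ ht1)) (pow_ne_zero _ h2t1)) hq2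
  have hB : (16*(3*t^2 - 3*t + 1)^2*(t - 1)^6*t^6 : ℚ) ≠ 0 :=
    mul_ne_zero (mul_ne_zero (mul_ne_zero (by norm_num) (pow_ne_zero _ hq3))
      (pow_ne_zero _ ht1)) (pow_ne_zero _ h0)
  have hP : (F12 t).Nonsingular (-4*(t-1)*(3*t^2-3*t+1)*t^5) (4*(t-1)*(3*t^2-3*t+1)*t^5*(2*t^2-2*t+1)*(2*t-1)) := by
    rw [nonsingular_iff, equation_iff]
    simp only [F12]
    constructor
    · ring
    · right; intro h; apply hy1; linarith
  have hP2 : (F12 t).Nonsingular (4*t^2*(t-1)^2*(3*t^2-3*t+1)^2) (-4*t^2*(t-1)^2*(2*t-1)^2*(2*t^2-2*t+1)*(3*t^2-3*t+1)^2) := by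
    rw [nonsingular_iff, equation_iff]
    simp only [F12]
    constructor
    · ring
    · right; intro h; apply hy2; linarith
  have hP4 : (F12 t).Nonsingular (4*t^4*(t-1)^4) (-4*t^4*(t-1)^4*(2*t-1)^2*(2*t^2-2*t+1)) := by
    rw [nonsingular_iff, equation_iff]
    simp only [F12]
    constructor
    · ring
    · right; intro h; apply hy4; linarith
  have hP0 : (F12 t).Nonsingular 0 0 := by
    rw [nonsingular_zero]
    exact ⟨rfl, Or.inr hB⟩
  have hy1' : (4*(t-1)*(3*t^2-3*t+1)*t^5*(2*t^2-2*t+1)*(2*t-1)) ≠ (F12 t).negY (-4*(t-1)*(3*t^2-3*t+1)*t^5) (4*(t-1)*(3*t^2-3*t+1)*t^5*(2*t^2-2*t+1)*(2*t-1)) := by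
    simp only [negY, F12]
    intro h; apply hy1; linarith
  have hS2 : (F12 t).slope (-4*(t-1)*(3*t^2-3*t+1)*t^5) (-4*(t-1)*(3*t^2-3*t+1)*t^5) (4*(t-1)*(3*t^2-3*t+1)*t^5*(2*t^2-2*t+1)*(2*t-1)) (4*(t-1)*(3*t^2-3*t+1)*t^5*(2*t^2-2*t+1)*(2*t-1)) = (6*t^4 - 16*t^3 + 14*t^2 - 6*t + 1) := by
    rw [slope_of_Y_ne rfl hy1']
    simp only [negY, F12]
    rw [div_eq_iff (by intro h; apply hy1; linarith)]
    ring
  have hadd2 : Point.some _ _ hP + Point.some _ _ hP = Point.some _ _ hP2 := by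
    rw [Point.add_self_of_Y_ne hy1']
    refine some_congr' _ _ ?_ ?_
    · rw [hS2]; simp only [addX, F12]; ring
    · rw [addY, negAddY, hS2]; simp only [addX, negY, F12]; ring
  have hy2' : (-4*t^2*(t-1)^2*(2*t-1)^2*(2*t^2-2*t+1)*(3*t^2-3*t+1)^2) ≠ (F12 t).negY (4*t^2*(t-1)^2*(3*t^2-3*t+1)^2) (-4*t^2*(t-1)^2*(2*t-1)^2*(2*t^2-2*t+1)*(3*t^2-3*t+1)^2) := by
    simp only [negY, F12]
    intro h; apply hy2; linarith
  have hS4 : (F12 t).slope (4*t^2*(t-1)^2*(3*t^2-3*t+1)^2) (4*t^2*(t-1)^2*(3*t^2-3*t+1)^2) (-4*t^2*(t-1)^2*(2*t-1)^2*(2*t^2-2*t+1)*(3*t^2-3*t+1)^2) (-4*t^2*(t-1)^2*(2*t-1)^2*(2*t^2-2*t+1)*(3*t^2-3*t+1)^2) = (-10*t^4 + 20*t^3 - 16*t^2 + 6*t - 1) := by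
    rw [slope_of_Y_ne rfl hy2']
    simp only [negY, F12]
    rw [div_eq_iff (by intro h; apply hy2; linarith)]
    ring
  have hadd4 : Point.some _ _ hP2 + Point.some _ _ hP2 = Point.some _ _ hP4 := by
    rw [Point.add_self_of_Y_ne hy2']
    refine some_congr' _ _ ?_ ?_
    · rw [hS4]; simp only [addX, F12]; ring
    · rw [addY, negAddY, hS4]; simp only [addX, negY, F12]; ring
  have hx24 : (4*t^2*(t-1)^2*(3*t^2-3*t+1)^2) ≠ (4*t^4*(t-1)^4) := by
    intro h
    have h4 : (4:ℚ)*t^2*(t-1)^2*(2*t-1)^2*(2*t^2-2*t+1) ≠ 0 :=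
      mul_ne_zero (mul_ne_zero (mul_ne_zero (mul_ne_zero (by norm_num)
        (pow_ne_zero _ h0)) (pow_ne_zero _ ht1)) (pow_ne_zero _ h2t1)) hq2
    apply h4; nlinarith [h]
  have hS6 : (F12 t).slope (4*t^2*(t-1)^2*(3*t^2-3*t+1)^2) (4*t^4*(t-1)^4) (-4*t^2*(t-1)^2*(2*t-1)^2*(2*t^2-2*t+1)*(3*t^2-3*t+1)^2) (-4*t^4*(t-1)^4*(2*t-1)^2*(2*t^2-2*t+1)) = (-8*t^4 + 16*t^3 - 14*t^2 + 6*t - 1) := by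
    rw [slope_of_X_ne hx24, div_eq_iff (sub_ne_zero.mpr hx24)]
    ring
  have hadd6 : Point.some _ _ hP2 + Point.some _ _ hP4 = Point.some _ _ hP0 := by
    rw [Point.add_of_X_ne hx24]
    refine some_congr' _ _ ?_ ?_
    · rw [hS6]; simp only [addX, F12]; ring
    · rw [addY, negAddY, hS6]; simp only [addX, negY, F12]; ring
  have hadd0 : Point.some _ _ hP0 + Point.some _ _ hP0 = (0 : (F12 t).Point) :=
    Point.add_self_of_Y_eq (by simp only [negY, F12]; ring)
  have h2 : 2 • Point.some _ _ hP = Point.some _ _ hP2 := by rw [two_nsmul]; exact hadd2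
  have h4 : 4 • Point.some _ _ hP = Point.some _ _ hP4 := by
    have h44 : (4 : ℕ) • Point.some _ _ hP = 2 • (2 • Point.some _ _ hP) := by rw [← mul_nsmul]
    rw [h44, h2, two_nsmul]; exact hadd4
  have h6 : 6 • Point.some _ _ hP = Point.some _ _ hP0 := by
    have h66 : (6 : ℕ) • Point.some _ _ hP = 2 • Point.some _ _ hP + 4 • Point.some _ _ hP := by
      rw [← add_nsmul]
    rw [h66, h2, h4]; exact hadd6
  have h12 : 12 • Point.some _ _ hP = (0 : (F12 t).Point) := by
    have h1212 : (12 : ℕ) • Point.some _ _ hP = 6 • Point.some _ _ hP + 6 • Point.some _ _ hP := by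
      rw [← add_nsmul]
    rw [h1212, h6]; exact hadd0
  refine ⟨hP, ?_⟩
  have hdvd : addOrderOf (Point.some _ _ hP) ∣ 12 := addOrderOf_dvd_of_nsmul_eq_zero h12
  have hn6 : ¬ addOrderOf (Point.some _ _ hP) ∣ 6 := by
    intro h
    have := addOrderOf_dvd_iff_nsmul_eq_zero.mp h
    rw [h6] at this
    exact Point.some_ne_zero hP0 this
  have hn4 : ¬ addOrderOf (Point.some _ _ hP) ∣ 4 := by
    intro h
    have := addOrderOf_dvd_iff_nsmul_eq_zero.mp h
    rw [h4] at this
    exact Point.some_ne_zero hP4 this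
  have hpos : 0 < addOrderOf (Point.some _ _ hP) := Nat.pos_of_dvd_of_pos hdvd (by norm_num)
  have hle : addOrderOf (Point.some _ _ hP) ≤ 12 := Nat.le_of_dvd (by norm_num) hdvd
  interval_cases h : addOrderOf (Point.some _ _ hP) <;>
    first | rfl | (exfalso; revert hdvd hn6 hn4; decide)
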